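/- Let N = (κ, ν) be a mixed binomial process on a measurable space (E, 𝓔), where the counting distribution κ has finite mean c and finite variance δ². Suppose there exist disjoint measurable sets A₀ and B₀ with ν(A₀) > 0 and ν(B₀) > 0. Then N is orthogonal — i.e., N(A) and N(B) are uncorrelated for every pair of disjoint measurable sets A, B — if and only if δ² = c. -/

import Mathlib

open MeasureTheory ProbabilityTheory

/-- The covariance of two real-valued random variables:
`Cov(X, Y) = E[(X − E X)(Y − E Y)]`. -/
noncomputable def cov {Ω : Type*} [MeasurableSpace Ω] (X Y : Ω → ℝ) (μ : Measure Ω) : ℝ :=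
  ∫ ω, (X ω - ∫ ω', X ω' ∂μ) * (Y ω - ∫ ω', Y ω' ∂μ) ∂μ

section Aux

variable {Ω : Type*} [MeasurableSpace Ω] {P : Measure Ω} [IsProbabilityMeasure P]
  {E : Type*} [mE : MeasurableSpace E]

theorem meas_uncurry {γ : Type*} [MeasurableSpace γ] {H : ℕ → (ℕ → E) → γ}
    (hH : ∀ k, Measurable (H k)) :
    Measurable (fun p : ℕ × (ℕ → E) => H p.1 p.2) := by
  have : (fun p : ℕ × (ℕ → E) => H p.1 p.2)
      = (fun q : (ℕ → E) × ℕ => H q.2 q.1) ∘ Prod.swap := rfl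
  rw [this]
  exact (measurable_from_prod_countable_left (fun k => hH k)).comp measurable_swap

theorem int_fst {α β : Type*} [MeasurableSpace α] [MeasurableSpace β]
    {κ : Measure α} (μ : Measure β) [IsProbabilityMeasure μ] {C : α → ℝ}
    (hCm : Measurable C) (hC : Integrable C κ) :
    Integrable (fun p : α × β => C p.1) (κ.prod μ) := by
  have h1 : Integrable C (Measure.map Prod.fst (κ.prod μ)) := by
    rw [Measure.map_fst_prod]; simpa using hC
  exact (integrable_map_measure hCm.aestronglyMeasurable measurable_fst.aemeasurable).mp h1

theorem key_transfer (K : Ω → ℕ) (Xs : Ω → ℕ → E) (hK : Measurable K) (hXs : Measurable Xs)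
    (hmap : Measure.map (fun ω => (K ω, Xs ω)) P = (Measure.map K P).prod (Measure.map Xs P))
    (H : ℕ → (ℕ → E) → ℝ) (hH : ∀ k, Measurable (H k))
    (hint : Integrable (fun p : ℕ × (ℕ → E) => H p.1 p.2)
      ((Measure.map K P).prod (Measure.map Xs P))) :
    ∫ ω, H (K ω) (Xs ω) ∂P
      = ∫ k, ∫ x, H k x ∂(Measure.map Xs P) ∂(Measure.map K P) := by
  have hHm := meas_uncurry hH
  calc ∫ ω, H (K ω) (Xs ω) ∂P
      = ∫ p : ℕ × (ℕ → E), H p.1 p.2 ∂(Measure.map (fun ω => (K ω, Xs ω)) P) :=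
        (integral_map (hK.prodMk hXs).aemeasurable hHm.aestronglyMeasurable).symm
    _ = ∫ p : ℕ × (ℕ → E), H p.1 p.2 ∂((Measure.map K P).prod (Measure.map Xs P)) := by
        rw [hmap]
    _ = ∫ k, ∫ x, H k x ∂(Measure.map Xs P) ∂(Measure.map K P) :=
        MeasureTheory.integral_prod _ hint


theorem cov_eq_integral_mul_sub {X Y : Ω → ℝ} (hX : Integrable X P) (hY : Integrable Y P)
    (hXY : Integrable (fun ω => X ω * Y ω) P) :
    cov X Y P = (∫ ω, X ω * Y ω ∂P) - (∫ ω, X ω ∂P) * (∫ ω, Y ω ∂P) := by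
  unfold cov
  set cX := ∫ ω', X ω' ∂P with hcX
  set cY := ∫ ω', Y ω' ∂P with hcY
  have h : ∀ ω, (X ω - cX) * (Y ω - cY)
      = X ω * Y ω - cX * Y ω - cY * X ω + cX * cY := fun ω => by ring
  have i1 : Integrable (fun ω => X ω * Y ω - cX * Y ω) P := hXY.sub (hY.const_mul _)
  have i2 : Integrable (fun ω => X ω * Y ω - cX * Y ω - cY * X ω) P := i1.sub (hX.const_mul _)
  simp only [h]
  rw [integral_add i2 (integrable_const _), integral_sub i1 (hX.const_mul _),
    integral_sub hXY (hY.const_mul _), integral_const_mul, integral_const_mul,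
    integral_const, probReal_univ]
  simp [← hcX, ← hcY]; ring

theorem cov_formula
    (P : Measure Ω) [IsProbabilityMeasure P] (ν : Measure E) [IsProbabilityMeasure ν]
    (K : Ω → ℕ) (X : ℕ → Ω → E)
    (hK : Measurable K) (hX : ∀ i, Measurable (X i))
    (hlaw : ∀ i, Measure.map (X i) P = ν)
    (hiid : iIndepFun X P)
    (hindep : IndepFun K (fun ω i => X i ω) P)
    (hK2 : MemLp (fun ω => (K ω : ℝ)) 2 P)
    (A B : Set E) (hA : MeasurableSet A) (hB : MeasurableSet B) (hd : Disjoint A B) :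
    cov (fun ω => ∑ i ∈ Finset.range (K ω), A.indicator (1 : E → ℝ) (X i ω))
        (fun ω => ∑ i ∈ Finset.range (K ω), B.indicator (1 : E → ℝ) (X i ω)) P
      = (ν A).toReal * (ν B).toReal *
          (variance (fun ω => (K ω : ℝ)) P - ∫ ω, (K ω : ℝ) ∂P) := by
  set f := A.indicator (1 : E → ℝ) with hf_def
  set g := B.indicator (1 : E → ℝ) with hg_def
  have hf : Measurable f := measurable_one.indicator hA
  have hg : Measurable g := measurable_one.indicator hB
  have hf0 : ∀ e, 0 ≤ f e := fun e => by
    rw [hf_def]; by_cases h : e ∈ A <;> simp [h]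
  have hf1 : ∀ e, f e ≤ 1 := fun e => by
    rw [hf_def]; by_cases h : e ∈ A <;> simp [h]
  have hg0 : ∀ e, 0 ≤ g e := fun e => by
    rw [hg_def]; by_cases h : e ∈ B <;> simp [h]
  have hg1 : ∀ e, g e ≤ 1 := fun e => by
    rw [hg_def]; by_cases h : e ∈ B <;> simp [h]
  have hfg0 : ∀ e, f e * g e = 0 := fun e => by
    rw [hf_def, hg_def]
    by_cases h1 : e ∈ A
    · have h2 : e ∉ B := Set.disjoint_left.mp hd h1
      simp [h1, h2]
    · simp [h1]
  set Xs : Ω → ℕ → E := fun ω i => X i ω with hXs_def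
  have hXs : Measurable Xs := measurable_pi_lambda _ hX
  set κ := Measure.map K P with hκ_def
  set μX := Measure.map Xs P with hμX_def
  haveI : IsProbabilityMeasure κ := Measure.isProbabilityMeasure_map hK.aemeasurable
  haveI : IsProbabilityMeasure μX := Measure.isProbabilityMeasure_map hXs.aemeasurable
  have hmap : Measure.map (fun ω => (K ω, Xs ω)) P = κ.prod μX :=
    (indepFun_iff_map_prod_eq_prod_map_map hK.aemeasurable hXs.aemeasurable).mp hindep
  have hcoord : ∀ i, Measure.map (fun x : ℕ → E => x i) μX = ν := by
    intro i
    rw [hμX_def, Measure.map_map (measurable_pi_apply i) hXs]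
    exact hlaw i
  set a := (ν A).toReal with ha_def
  set b := (ν B).toReal with hb_def
  -- single-coordinate expectations under μX
  have hfa : ∀ i, ∫ x, f (x i) ∂μX = a := by
    intro i
    have h1 := integral_map (μ := μX) (φ := fun x : ℕ → E => x i)
      (measurable_pi_apply i).aemeasurable (f := f) hf.aestronglyMeasurable
    rw [hcoord i] at h1
    rw [← h1, hf_def, integral_indicator_one hA]; rfl
  have hgb : ∀ j, ∫ x, g (x j) ∂μX = b := by
    intro j
    have h1 := integral_map (μ := μX) (φ := fun x : ℕ → E => x j)
      (measurable_pi_apply j).aemeasurable (f := g) hg.aestronglyMeasurable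
    rw [hcoord j] at h1
    rw [← h1, hg_def, integral_indicator_one hB]; rfl
  -- expectations under P of single coordinates
  have hfaP : ∀ i, ∫ ω, f (X i ω) ∂P = a := by
    intro i
    have h1 := integral_map (μ := P) (φ := X i) (hX i).aemeasurable
      (f := f) (by rw [hlaw i]; exact hf.aestronglyMeasurable)
    rw [hlaw i] at h1
    rw [← h1, hf_def, integral_indicator_one hA]; rfl
  have hgbP : ∀ j, ∫ ω, g (X j ω) ∂P = b := by
    intro j
    have h1 := integral_map (μ := P) (φ := X j) (hX j).aemeasurable
      (f := g) (by rw [hlaw j]; exact hg.aestronglyMeasurable)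
    rw [hlaw j] at h1
    rw [← h1, hg_def, integral_indicator_one hB]; rfl
  -- pair expectation
  have hpair : ∀ i j, i ≠ j → ∫ x, f (x i) * g (x j) ∂μX = a * b := by
    intro i j hne
    have hm : Measurable (fun x : ℕ → E => f (x i) * g (x j)) :=
      (hf.comp (measurable_pi_apply i)).mul (hg.comp (measurable_pi_apply j))
    have h1 : ∫ x, f (x i) * g (x j) ∂μX = ∫ ω, f (X i ω) * g (X j ω) ∂P := by
      rw [hμX_def]
      exact integral_map hXs.aemeasurable hm.aestronglyMeasurable
    have hij : IndepFun (fun ω => f (X i ω)) (fun ω => g (X j ω)) P :=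
      (hiid.indepFun hne).comp hf hg
    have h2 : ∫ ω, f (X i ω) * g (X j ω) ∂P = (∫ ω, f (X i ω) ∂P) * ∫ ω, g (X j ω) ∂P :=
      hij.integral_mul_eq_mul_integral
      (hf.comp (hX i)).aestronglyMeasurable (hg.comp (hX j)).aestronglyMeasurable
    rw [h1, h2, hfaP i, hgbP j]
  -- integrability of bounded measurable functions on μX
  have ibnd : ∀ (h : (ℕ → E) → ℝ), Measurable h → (∀ x, ‖h x‖ ≤ 1) → Integrable h μX :=
    fun h hm hb => (integrable_const 1).mono' hm.aestronglyMeasurable (ae_of_all _ hb)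
  have hbnd_f : ∀ i, ∀ x : ℕ → E, ‖f (x i)‖ ≤ 1 := fun i x => by
    rw [Real.norm_eq_abs, abs_of_nonneg (hf0 _)]; exact hf1 _
  have hbnd_g : ∀ j, ∀ x : ℕ → E, ‖g (x j)‖ ≤ 1 := fun j x => by
    rw [Real.norm_eq_abs, abs_of_nonneg (hg0 _)]; exact hg1 _
  have hbnd_fg : ∀ i j, ∀ x : ℕ → E, ‖f (x i) * g (x j)‖ ≤ 1 := fun i j x => by
    rw [norm_mul]
    calc ‖f (x i)‖ * ‖g (x j)‖ ≤ 1 * 1 :=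
          mul_le_mul (hbnd_f i x) (hbnd_g j x) (norm_nonneg _) zero_le_one
      _ = 1 := one_mul 1
  -- inner integral 1
  have inner1 : ∀ k : ℕ, ∫ x, (∑ i ∈ Finset.range k, f (x i)) ∂μX = (k : ℝ) * a := by
    intro k
    rw [integral_finset_sum _ (fun i _ =>
      ibnd (fun x => f (x i)) (hf.comp (measurable_pi_apply i)) (hbnd_f i))]
    simp [hfa, Finset.sum_const, Finset.card_range, nsmul_eq_mul]
  have inner1g : ∀ k : ℕ, ∫ x, (∑ j ∈ Finset.range k, g (x j)) ∂μX = (k : ℝ) * b := by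
    intro k
    rw [integral_finset_sum _ (fun j _ =>
      ibnd (fun x => g (x j)) (hg.comp (measurable_pi_apply j)) (hbnd_g j))]
    simp [hgb, Finset.sum_const, Finset.card_range, nsmul_eq_mul]
  -- inner integral 2
  have hterm : ∀ i j : ℕ, ∫ x, f (x i) * g (x j) ∂μX = if i = j then 0 else a * b := by
    intro i j
    by_cases h : i = j
    · subst h
      simp only [hfg0, if_pos rfl]
      exact integral_zero _ _
    · rw [if_neg h]; exact hpair i j h
  have inner2 : ∀ k : ℕ, ∫ x, (∑ i ∈ Finset.range k, f (x i)) *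
      (∑ j ∈ Finset.range k, g (x j)) ∂μX = ((k : ℝ) ^ 2 - k) * (a * b) := by
    intro k
    have expand : ∀ x : ℕ → E, (∑ i ∈ Finset.range k, f (x i)) *
        (∑ j ∈ Finset.range k, g (x j))
        = ∑ i ∈ Finset.range k, ∑ j ∈ Finset.range k, f (x i) * g (x j) := fun x => by
      rw [Finset.sum_mul_sum]
    simp only [expand]
    rw [integral_finset_sum _ (fun i _ => integrable_finset_sum _ (fun j _ =>
      ibnd (fun x => f (x i) * g (x j))
        ((hf.comp (measurable_pi_apply i)).mul (hg.comp (measurable_pi_apply j)))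
        (hbnd_fg i j)))]
    have : ∀ i ∈ Finset.range k, (∫ x, ∑ j ∈ Finset.range k, f (x i) * g (x j) ∂μX)
        = (k : ℝ) * (a * b) - a * b := by
      intro i hi
      rw [integral_finset_sum _ (fun j _ =>
        ibnd (fun x => f (x i) * g (x j))
          ((hf.comp (measurable_pi_apply i)).mul (hg.comp (measurable_pi_apply j)))
          (hbnd_fg i j))]
      simp only [hterm]
      have hsplit : ∀ j : ℕ, (if i = j then (0:ℝ) else a * b)
          = a * b - (if i = j then a * b else 0) := fun j => by split_ifs <;> ring
      simp only [hsplit]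
      rw [Finset.sum_sub_distrib, Finset.sum_const, Finset.card_range, Finset.sum_ite_eq,
        if_pos hi, nsmul_eq_mul]
    rw [Finset.sum_congr rfl this, Finset.sum_const, Finset.card_range, nsmul_eq_mul]
    ring

  -- measurability of the uncurried summands
  have hH1 : ∀ k : ℕ, Measurable (fun x : ℕ → E => ∑ i ∈ Finset.range k, f (x i)) :=
    fun k => Finset.measurable_sum _ (fun i _ => hf.comp (measurable_pi_apply i))
  have hH2 : ∀ k : ℕ, Measurable (fun x : ℕ → E => ∑ j ∈ Finset.range k, g (x j)) :=
    fun k => Finset.measurable_sum _ (fun j _ => hg.comp (measurable_pi_apply j))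
  have hH1bd : ∀ (k : ℕ) (x : ℕ → E), ‖∑ i ∈ Finset.range k, f (x i)‖ ≤ (k : ℝ) := by
    intro k x
    rw [Real.norm_eq_abs, abs_of_nonneg (Finset.sum_nonneg fun i _ => hf0 _)]
    calc ∑ i ∈ Finset.range k, f (x i) ≤ ∑ i ∈ Finset.range k, 1 :=
          Finset.sum_le_sum fun i _ => hf1 _
      _ = (k : ℝ) := by simp
  have hH2bd : ∀ (k : ℕ) (x : ℕ → E), ‖∑ j ∈ Finset.range k, g (x j)‖ ≤ (k : ℝ) := by
    intro k x
    rw [Real.norm_eq_abs, abs_of_nonneg (Finset.sum_nonneg fun j _ => hg0 _)]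
    calc ∑ j ∈ Finset.range k, g (x j) ≤ ∑ j ∈ Finset.range k, 1 :=
          Finset.sum_le_sum fun j _ => hg1 _
      _ = (k : ℝ) := by simp
  have hH12bd : ∀ (k : ℕ) (x : ℕ → E),
      ‖(∑ i ∈ Finset.range k, f (x i)) * (∑ j ∈ Finset.range k, g (x j))‖ ≤ (k : ℝ) ^ 2 := by
    intro k x
    rw [norm_mul]
    calc ‖∑ i ∈ Finset.range k, f (x i)‖ * ‖∑ j ∈ Finset.range k, g (x j)‖
        ≤ (k : ℝ) * (k : ℝ) :=
          mul_le_mul (hH1bd k x) (hH2bd k x) (norm_nonneg _) (Nat.cast_nonneg k)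
      _ = (k : ℝ) ^ 2 := (sq (k : ℝ)).symm
  -- integrability facts
  have mcast : Measurable (fun k : ℕ => (k : ℝ)) := measurable_from_top
  have mcast2 : Measurable (fun k : ℕ => (k : ℝ) ^ 2) := measurable_from_top
  have iK : Integrable (fun ω => (K ω : ℝ)) P := hK2.integrable one_le_two
  have iK2 : Integrable (fun ω => (K ω : ℝ) ^ 2) P := hK2.integrable_sq
  have iκK : Integrable (fun k : ℕ => (k : ℝ)) κ := by
    rw [hκ_def, integrable_map_measure mcast.aestronglyMeasurable hK.aemeasurable]
    exact iK
  have iκK2 : Integrable (fun k : ℕ => (k : ℝ) ^ 2) κ := by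
    rw [hκ_def, integrable_map_measure mcast2.aestronglyMeasurable hK.aemeasurable]
    exact iK2
  have mom1 : ∫ k, (k : ℝ) ∂κ = ∫ ω, (K ω : ℝ) ∂P := by
    rw [hκ_def]; exact integral_map hK.aemeasurable mcast.aestronglyMeasurable
  have mom2 : ∫ k, (k : ℝ) ^ 2 ∂κ = ∫ ω, (K ω : ℝ) ^ 2 ∂P := by
    rw [hκ_def]; exact integral_map hK.aemeasurable mcast2.aestronglyMeasurable
  -- first moments of N(A), N(B)
  have eNA : ∫ ω, (∑ i ∈ Finset.range (K ω), f (X i ω)) ∂P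
      = a * ∫ ω, (K ω : ℝ) ∂P := by
    have hint : Integrable (fun p : ℕ × (ℕ → E) => ∑ i ∈ Finset.range p.1, f (p.2 i))
        (κ.prod μX) :=
      (int_fst μX mcast iκK).mono' (meas_uncurry hH1).aestronglyMeasurable
        (ae_of_all _ fun p => hH1bd p.1 p.2)
    have h := key_transfer (P := P) K Xs hK hXs hmap
      (fun k x => ∑ i ∈ Finset.range k, f (x i)) hH1 hint
    calc ∫ ω, (∑ i ∈ Finset.range (K ω), f (X i ω)) ∂P
        = ∫ k, ∫ x, (∑ i ∈ Finset.range k, f (x i)) ∂μX ∂κ := h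
      _ = ∫ k, (k : ℝ) * a ∂κ := by simp only [inner1]
      _ = (∫ k, (k : ℝ) ∂κ) * a := integral_mul_const _ _
      _ = a * ∫ ω, (K ω : ℝ) ∂P := by rw [mom1]; ring
  have eNB : ∫ ω, (∑ j ∈ Finset.range (K ω), g (X j ω)) ∂P
      = b * ∫ ω, (K ω : ℝ) ∂P := by
    have hint : Integrable (fun p : ℕ × (ℕ → E) => ∑ j ∈ Finset.range p.1, g (p.2 j))
        (κ.prod μX) :=
      (int_fst μX mcast iκK).mono' (meas_uncurry hH2).aestronglyMeasurable
        (ae_of_all _ fun p => hH2bd p.1 p.2)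
    have h := key_transfer (P := P) K Xs hK hXs hmap
      (fun k x => ∑ j ∈ Finset.range k, g (x j)) hH2 hint
    calc ∫ ω, (∑ j ∈ Finset.range (K ω), g (X j ω)) ∂P
        = ∫ k, ∫ x, (∑ j ∈ Finset.range k, g (x j)) ∂μX ∂κ := h
      _ = ∫ k, (k : ℝ) * b ∂κ := by simp only [inner1g]
      _ = (∫ k, (k : ℝ) ∂κ) * b := integral_mul_const _ _
      _ = b * ∫ ω, (K ω : ℝ) ∂P := by rw [mom1]; ring
  -- second mixed moment
  have eProd : ∫ ω, (∑ i ∈ Finset.range (K ω), f (X i ω)) *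
      (∑ j ∈ Finset.range (K ω), g (X j ω)) ∂P
      = ((∫ ω, (K ω : ℝ) ^ 2 ∂P) - ∫ ω, (K ω : ℝ) ∂P) * (a * b) := by
    have hint : Integrable (fun p : ℕ × (ℕ → E) =>
        (∑ i ∈ Finset.range p.1, f (p.2 i)) * (∑ j ∈ Finset.range p.1, g (p.2 j)))
        (κ.prod μX) :=
      (int_fst μX mcast2 iκK2).mono'
        (meas_uncurry (fun k => (hH1 k).mul (hH2 k))).aestronglyMeasurable
        (ae_of_all _ fun p => hH12bd p.1 p.2)
    have h := key_transfer (P := P) K Xs hK hXs hmap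
      (fun k x => (∑ i ∈ Finset.range k, f (x i)) * (∑ j ∈ Finset.range k, g (x j)))
      (fun k => (hH1 k).mul (hH2 k)) hint
    calc ∫ ω, (∑ i ∈ Finset.range (K ω), f (X i ω)) *
          (∑ j ∈ Finset.range (K ω), g (X j ω)) ∂P
        = ∫ k, ∫ x, (∑ i ∈ Finset.range k, f (x i)) *
            (∑ j ∈ Finset.range k, g (x j)) ∂μX ∂κ := h
      _ = ∫ k, ((k : ℝ) ^ 2 - k) * (a * b) ∂κ := by simp only [inner2]
      _ = (∫ k, ((k : ℝ) ^ 2 - (k : ℝ)) ∂κ) * (a * b) := integral_mul_const _ _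
      _ = ((∫ ω, (K ω : ℝ) ^ 2 ∂P) - ∫ ω, (K ω : ℝ) ∂P) * (a * b) := by
          rw [integral_sub iκK2 iκK, mom1, mom2]
  -- integrability over P
  have hNAmeas : Measurable (fun ω => ∑ i ∈ Finset.range (K ω), f (X i ω)) :=
    (meas_uncurry hH1).comp (hK.prodMk hXs)
  have hNBmeas : Measurable (fun ω => ∑ j ∈ Finset.range (K ω), g (X j ω)) :=
    (meas_uncurry hH2).comp (hK.prodMk hXs)
  have iNA : Integrable (fun ω => ∑ i ∈ Finset.range (K ω), f (X i ω)) P :=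
    iK.mono' hNAmeas.aestronglyMeasurable (ae_of_all _ fun ω => hH1bd (K ω) (Xs ω))
  have iNB : Integrable (fun ω => ∑ j ∈ Finset.range (K ω), g (X j ω)) P :=
    iK.mono' hNBmeas.aestronglyMeasurable (ae_of_all _ fun ω => hH2bd (K ω) (Xs ω))
  have iNANB : Integrable (fun ω => (∑ i ∈ Finset.range (K ω), f (X i ω)) *
      (∑ j ∈ Finset.range (K ω), g (X j ω))) P :=
    iK2.mono' (hNAmeas.mul hNBmeas).aestronglyMeasurable
      (ae_of_all _ fun ω => hH12bd (K ω) (Xs ω))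
  have hcov := cov_eq_integral_mul_sub iNA iNB iNANB
  rw [hcov, eProd, eNA, eNB, variance_eq_sub hK2]
  simp only [Pi.pow_apply]
  ring

end Aux

/-- **Orthogonality condition.** A mixed binomial process `N = (κ, ν)` with
counting variable `K ~ κ` of finite mean `c` and finite variance `δ²`, such that there exist
disjoint measurable sets `A₀, B₀` of positive `ν`-measure, is orthogonal — i.e. `N(A)` and
`N(B)` are uncorrelated for every pair of disjoint measurable sets `A, B` — iff `δ² = c`. -/
theorem mixedBinomial_orthogonal_iff
    {Ω : Type*} [MeasurableSpace Ω] (P : Measure Ω) [IsProbabilityMeasure P]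
    {E : Type*} [mE : MeasurableSpace E] (ν : Measure E) [IsProbabilityMeasure ν]
    (K : Ω → ℕ) (X : ℕ → Ω → E)
    (hK : Measurable K) (hX : ∀ i, Measurable (X i))
    -- the Xᵢ are iid with common law ν
    (hlaw : ∀ i, Measure.map (X i) P = ν)
    (hiid : iIndepFun X P)
    -- K is independent of the sequence (Xᵢ)
    (hindep : IndepFun K (fun ω i => X i ω) P)
    -- the counting distribution κ (the law of K) has finite mean and finite variance
    (hK2 : MemLp (fun ω => (K ω : ℝ)) 2 P)
    -- there exist disjoint measurable sets of positive ν-measure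
    (hpos : ∃ A₀ B₀ : Set E, MeasurableSet A₀ ∧ MeasurableSet B₀ ∧ Disjoint A₀ B₀ ∧
      0 < ν A₀ ∧ 0 < ν B₀) :
    (∀ A B : Set E, MeasurableSet A → MeasurableSet B → Disjoint A B →
        cov (fun ω => ∑ i ∈ Finset.range (K ω), A.indicator (1 : E → ℝ) (X i ω))
            (fun ω => ∑ i ∈ Finset.range (K ω), B.indicator (1 : E → ℝ) (X i ω)) P = 0)
      ↔ variance (fun ω => (K ω : ℝ)) P = ∫ ω, (K ω : ℝ) ∂P := by
  obtain ⟨A₀, B₀, hA₀, hB₀, hd₀, hp₀, hq₀⟩ := hpos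
  constructor
  · intro h
    have hform := cov_formula P ν K X hK hX hlaw hiid hindep hK2 A₀ B₀ hA₀ hB₀ hd₀
    rw [h A₀ B₀ hA₀ hB₀ hd₀] at hform
    have ha : (0:ℝ) < (ν A₀).toReal := ENNReal.toReal_pos hp₀.ne' (measure_ne_top ν _)
    have hb : (0:ℝ) < (ν B₀).toReal := ENNReal.toReal_pos hq₀.ne' (measure_ne_top ν _)
    rcases mul_eq_zero.mp hform.symm with h1 | h2
    · rcases mul_eq_zero.mp h1 with h3 | h4
      · exact absurd h3 ha.ne'
      · exact absurd h4 hb.ne'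
    · linarith [sub_eq_zero.mp h2]
  · intro h A B hA hB hd
    rw [cov_formula P ν K X hK hX hlaw hiid hindep hK2 A B hA hB hd, h, sub_self, mul_zero]
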